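/- arXiv:2307.06805 — 3 statements merged into one kernel-verified Lean document; each statement's English description precedes it below -/
import Mathlib

section
/- Let h be a C¹ solution of ∇h·f = λh − wᵀf_n. If e^{-λt} h(s_t(x)) → 0 as t → ∞ and the integral converges, then h(x) = ∫₀^∞ e^{-λt} wᵀ f_n(s_t(x)) dt, and consequently the principal eigenfunction is φ(x) = wᵀx + ∫₀^∞ e^{-λt} wᵀ f_n(s_t(x)) dt. -/
open scoped BigOperators

/-- If h is a C¹ solution of ∇h·f = λh − wᵀf_n, e^{-λt}h(s_t(x)) → 0 as
t → ∞ and the path integral converges, then h(x) = ∫₀^∞ e^{-λt} wᵀf_n(s_t(x)) dt, and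
the principal eigenfunction is φ(x) = wᵀx + ∫₀^∞ e^{-λt} wᵀf_n(s_t(x)) dt. -/
theorem path_integral_eigenfunction_formula
    {n : ℕ} (f f_n : EuclideanSpace ℝ (Fin n) → EuclideanSpace ℝ (Fin n))
    (s : ℝ → EuclideanSpace ℝ (Fin n) → EuclideanSpace ℝ (Fin n))
    (h : EuclideanSpace ℝ (Fin n) → ℂ) (w : Fin n → ℂ) (l : ℂ)
    (φ : EuclideanSpace ℝ (Fin n) → ℂ) (x : EuclideanSpace ℝ (Fin n))
    (hf : ContDiff ℝ 1 f) (hfn : Continuous f_n)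
    (hh : ContDiff ℝ 1 h)
    (hφdef : ∀ y, φ y = (∑ i, w i * (y i : ℂ)) + h y)
    (hs0 : ∀ y, s 0 y = y)
    (hsderiv : ∀ (t : ℝ) y, HasDerivAt (fun τ => s τ y) (f (s t y)) t)
    (hpde : ∀ y, fderiv ℝ h y (f y) = l * h y - ∑ i, w i * ((f_n y) i : ℂ))
    (hdecay : Filter.Tendsto (fun t : ℝ => Complex.exp (-(l * t)) * h (s t x))
      Filter.atTop (nhds 0))
    (hint : MeasureTheory.IntegrableOn
      (fun t : ℝ => Complex.exp (-(l * t)) * ∑ i, w i * ((f_n (s t x)) i : ℂ))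
      (Set.Ioi (0:ℝ))) :
    h x = (∫ t in Set.Ioi (0:ℝ),
        Complex.exp (-(l * t)) * ∑ i, w i * ((f_n (s t x)) i : ℂ)) ∧
    φ x = (∑ i, w i * (x i : ℂ)) +
      ∫ t in Set.Ioi (0:ℝ),
        Complex.exp (-(l * t)) * ∑ i, w i * ((f_n (s t x)) i : ℂ) := by
  have key : h x = ∫ t in Set.Ioi (0:ℝ),
      Complex.exp (-(l * t)) * ∑ i, w i * ((f_n (s t x)) i : ℂ) := by
    have hderiv : ∀ t : ℝ, HasDerivAt (fun τ : ℝ => Complex.exp (-(l * τ)) * h (s τ x))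
        (-(Complex.exp (-(l * t)) * ∑ i, w i * ((f_n (s t x)) i : ℂ))) t := by
      intro t
      have h1 : HasDerivAt (fun τ : ℝ => -(l * (τ : ℂ))) (-l) t := by
        have := ((Complex.ofRealCLM.hasDerivAt (x := t)).const_mul l).neg
        exact this.congr_deriv (by simp)
      have hexp : HasDerivAt (fun τ : ℝ => Complex.exp (-(l * τ)))
          (Complex.exp (-(l * t)) * (-l)) t :=
        (Complex.hasDerivAt_exp (-(l * t))).comp t h1
      have hcomp : HasDerivAt (fun τ : ℝ => h (s τ x))
          (fderiv ℝ h (s t x) (f (s t x))) t :=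
        ((hh.differentiable one_ne_zero) (s t x)).hasFDerivAt.comp_hasDerivAt t (hsderiv t x)
      have := hexp.mul hcomp
      rw [hpde (s t x)] at this
      convert this using 1
      exacts [rfl, rfl, by ring]
    have := MeasureTheory.integral_Ioi_of_hasDerivAt_of_tendsto'
      (f := fun τ : ℝ => Complex.exp (-(l * τ)) * h (s τ x))
      (f' := fun t => -(Complex.exp (-(l * t)) * ∑ i, w i * ((f_n (s t x)) i : ℂ)))
      (a := 0) (m := 0) (fun t _ => hderiv t) hint.neg hdecay
    rw [MeasureTheory.integral_neg] at this
    simp only [hs0, mul_zero, neg_zero, Complex.ofReal_zero, Complex.exp_zero, one_mul,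
      zero_sub, neg_inj] at this
    exact this.symm
  exact ⟨key, by rw [hφdef x, key]⟩
end

section
/- Let Φ(x) = (φ₁(x),…,φₙ(x)) where each φᵢ is a C¹ eigenfunction with eigenvalue λᵢ of Re(λᵢ) < 0, let Λ = diag(λ₁,…,λₙ), and let P be a Hermitian positive definite matrix satisfying Λ*P + PΛ ≺ 0 (negative definite). Then V(x) = Φ(x)* P Φ(x) satisfies d/dt V(s_t(x)) = Φ(s_t(x))* (Λ*P + PΛ) Φ(s_t(x)) ≤ 0 along trajectories, i.e., V is nonincreasing along the flow. -/
open scoped BigOperators ComplexConjugate Matrix ComplexOrder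

/-- Lyapunov function from Koopman eigenfunctions. With Φ = (φ₁,…,φₙ),
φᵢ(s_t(x)) = e^{λᵢ t}φᵢ(x), Re(λᵢ)<0, Λ = diag(λᵢ), P Hermitian positive definite with
Λ*P + PΛ negative definite, V(x) = Φ(x)*PΦ(x) satisfies
d/dt V(s_t(x)) = Φ(s_t(x))*(Λ*P + PΛ)Φ(s_t(x)) ≤ 0 along trajectories. -/
theorem koopman_lyapunov_function
    {n m : ℕ} (s : ℝ → EuclideanSpace ℝ (Fin n) → EuclideanSpace ℝ (Fin n))
    (φ : Fin m → EuclideanSpace ℝ (Fin n) → ℂ) (l : Fin m → ℂ)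
    (P : Matrix (Fin m) (Fin m) ℂ)
    (hl : ∀ i, (l i).re < 0)
    (hφ : ∀ i, Continuous (φ i))
    (heig : ∀ i y, ∀ t : ℝ, φ i (s t y) = Complex.exp (l i * t) * φ i y)
    (hP : P.PosDef)
    (hQ : (-(((Matrix.diagonal l)ᴴ * P) + P * Matrix.diagonal l)).PosDef) :
    ∀ (x : EuclideanSpace ℝ (Fin n)) (t : ℝ), 0 ≤ t →
      HasDerivAt
        (fun τ : ℝ => ∑ i, ∑ j, conj (φ i (s τ x)) * P i j * φ j (s τ x))
        (∑ i, ∑ j, conj (φ i (s t x)) *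
          (((Matrix.diagonal l)ᴴ * P) + P * Matrix.diagonal l) i j * φ j (s t x)) t ∧
      (∑ i, ∑ j, conj (φ i (s t x)) *
          (((Matrix.diagonal l)ᴴ * P) + P * Matrix.diagonal l) i j * φ j (s t x)).re
        ≤ 0 := by
  intro x t ht
  classical
  have hMapp : ∀ i j, (((Matrix.diagonal l)ᴴ * P) + P * Matrix.diagonal l) i j
      = conj (l i) * P i j + P i j * l j := by
    intro i j
    simp [Matrix.add_apply, Matrix.diagonal_conjTranspose, Matrix.diagonal_mul,
      Matrix.mul_diagonal, Pi.star_apply]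
  have key : ∀ τ : ℝ, (∑ i, ∑ j, conj (φ i (s τ x)) * P i j * φ j (s τ x))
      = ∑ i, ∑ j, (conj (φ i x) * P i j * φ j x) *
          Complex.exp ((conj (l i) + l j) * τ) := by
    intro τ
    refine Finset.sum_congr rfl fun i _ => Finset.sum_congr rfl fun j _ => ?_
    rw [heig i x τ, heig j x τ, map_mul, ← Complex.exp_conj, map_mul,
      Complex.conj_ofReal, add_mul, Complex.exp_add]
    ring
  have hexp : ∀ c : ℂ, HasDerivAt (fun τ : ℝ => Complex.exp (c * τ))
      (c * Complex.exp (c * t)) t := by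
    intro c
    have h0 : HasDerivAt (fun τ : ℝ => (τ : ℂ)) 1 t := by
      simpa using (hasDerivAt_id t).ofReal_comp
    have h1 := (h0.const_mul c).cexp
    simpa [mul_comm] using h1
  have hderiv : HasDerivAt (fun τ : ℝ => ∑ i, ∑ j,
      (conj (φ i x) * P i j * φ j x) * Complex.exp ((conj (l i) + l j) * τ))
      (∑ i, ∑ j, (conj (φ i x) * P i j * φ j x) *
        ((conj (l i) + l j) * Complex.exp ((conj (l i) + l j) * t))) t := by
    refine HasDerivAt.fun_sum fun i _ => HasDerivAt.fun_sum fun j _ => ?_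
    exact (hexp (conj (l i) + l j)).const_mul _
  have hsum : (∑ i, ∑ j, (conj (φ i x) * P i j * φ j x) *
        ((conj (l i) + l j) * Complex.exp ((conj (l i) + l j) * t)))
      = ∑ i, ∑ j, conj (φ i (s t x)) *
          (((Matrix.diagonal l)ᴴ * P) + P * Matrix.diagonal l) i j * φ j (s t x) := by
    refine Finset.sum_congr rfl fun i _ => Finset.sum_congr rfl fun j _ => ?_
    rw [heig i x t, heig j x t, hMapp, map_mul, ← Complex.exp_conj, map_mul,
      Complex.conj_ofReal]
    simp only [add_mul, Complex.exp_add]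
    ring
  constructor
  · have hfun : (fun τ : ℝ => ∑ i, ∑ j, conj (φ i (s τ x)) * P i j * φ j (s τ x))
        = fun τ : ℝ => ∑ i, ∑ j, (conj (φ i x) * P i j * φ j x) *
            Complex.exp ((conj (l i) + l j) * τ) := funext key
    rw [hfun, ← hsum]
    exact hderiv
  · set z : Fin m → ℂ := fun i => φ i (s t x) with hz
    have hpos := hQ.posSemidef.dotProduct_mulVec_nonneg z
    have hval : star z ⬝ᵥ ((-(((Matrix.diagonal l)ᴴ * P) + P * Matrix.diagonal l)) *ᵥ z)
        = -(∑ i, ∑ j, conj (φ i (s t x)) *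
            (((Matrix.diagonal l)ᴴ * P) + P * Matrix.diagonal l) i j * φ j (s t x)) := by
      simp only [dotProduct, Matrix.mulVec, Matrix.neg_apply, Pi.star_apply,
        RCLike.star_def]
      rw [← Finset.sum_neg_distrib]
      refine Finset.sum_congr rfl fun i _ => ?_
      rw [← Finset.sum_neg_distrib, Finset.mul_sum]
      refine Finset.sum_congr rfl fun j _ => ?_
      simp [hz]; ring
    rw [hval] at hpos
    rw [Complex.le_def] at hpos
    have := hpos.1
    simp only [Complex.zero_re, Complex.neg_re] at this
    linarith
end

section
/- Consider ẋ = −(x − x³) on (−1,1) with explicit flow s_t(x) = x e^{-t}/√(1 − x² + x²e^{-2t}). Then the path-integral formula recovers the analytical eigenfunction: x + ∫₀^∞ e^{t} · (x³-substituted nonlinear part) dt, i.e., x + ∫₀^∞ e^{t} (s_t(x))³ dt = x/√(1 − x²) for all x ∈ (−1,1). -/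
open MeasureTheory Set Filter Real Topology

/-- For ẋ = −(x − x³) with explicit flow
s_t(x) = x e^{-t}/√(1 − x² + x² e^{-2t}), the path-integral formula recovers the
analytical eigenfunction: x + ∫₀^∞ eᵗ (s_t(x))³ dt = x/√(1 − x²) on (−1,1). -/
theorem path_integral_recovers_analytical :
    ∀ x ∈ Set.Ioo (-1 : ℝ) 1,
      x + (∫ t in Set.Ioi (0 : ℝ),
          Real.exp t *
            (x * Real.exp (-t) / Real.sqrt (1 - x ^ 2 + x ^ 2 * Real.exp (-2 * t))) ^ 3)
        = x / Real.sqrt (1 - x ^ 2) := by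
  rintro x ⟨hx1, hx2⟩
  have hx2' : x ^ 2 < 1 := by nlinarith
  have hc0 : (0:ℝ) < 1 - x ^ 2 := by linarith
  have hD : ∀ t : ℝ, 0 < 1 - x ^ 2 + x ^ 2 * Real.exp (-2 * t) := fun t => by positivity
  set F : ℝ → ℝ := fun t => x / Real.sqrt (1 - x ^ 2 + x ^ 2 * Real.exp (-2 * t)) with hF
  set g : ℝ → ℝ := fun t => Real.exp t *
      (x * Real.exp (-t) / Real.sqrt (1 - x ^ 2 + x ^ 2 * Real.exp (-2 * t))) ^ 3 with hg
  have he3 : ∀ t : ℝ, Real.exp t * Real.exp (-t) ^ 3 = Real.exp (-2 * t) := by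
    intro t
    rw [← Real.exp_nat_mul, ← Real.exp_add]; ring_nf
  have hgeq : ∀ t : ℝ, g t = x ^ 3 * Real.exp (-2 * t) /
      Real.sqrt (1 - x ^ 2 + x ^ 2 * Real.exp (-2 * t)) ^ 3 := by
    intro t
    simp only [hg, div_pow, mul_pow]
    rw [mul_div_assoc']
    congr 1
    rw [← he3 t]; ring
  have hderiv : ∀ t : ℝ, HasDerivAt F (g t) t := by
    intro t
    have hDt := hD t
    have hst : 0 < Real.sqrt (1 - x ^ 2 + x ^ 2 * Real.exp (-2 * t)) := Real.sqrt_pos.mpr hDt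
    have h1 : HasDerivAt (fun t : ℝ => 1 - x ^ 2 + x ^ 2 * Real.exp (-2 * t))
        (x ^ 2 * (Real.exp (-2 * t) * (-2))) t := by
      have := (((hasDerivAt_id t).const_mul (-2 : ℝ)).exp).const_mul (x ^ 2)
      simpa [mul_comm] using this.const_add (1 - x ^ 2)
    have h2 := h1.sqrt (ne_of_gt hDt)
    have h3 := (hasDerivAt_const t x).div h2 (ne_of_gt hst)
    refine h3.congr_deriv ?_; symm
    have hsq : Real.sqrt (1 - x ^ 2 + x ^ 2 * Real.exp (-2 * t)) ^ 2
        = 1 - x ^ 2 + x ^ 2 * Real.exp (-2 * t) := Real.sq_sqrt hDt.le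
    rw [hgeq t]
    field_simp
    simp only [neg_mul] at hsq ⊢
    ring
  have hcont : ContinuousWithinAt F (Ici 0) 0 := (hderiv 0).continuousAt.continuousWithinAt
  have htend : Tendsto F atTop (𝓝 (x / Real.sqrt (1 - x ^ 2))) := by
    have h1 : Tendsto (fun t : ℝ => Real.exp (-2 * t)) atTop (𝓝 0) := by
      apply Real.tendsto_exp_atBot.comp
      exact Tendsto.const_mul_atTop_of_neg (by norm_num) tendsto_id
    have h2 : Tendsto (fun t : ℝ => 1 - x ^ 2 + x ^ 2 * Real.exp (-2 * t)) atTop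
        (𝓝 (1 - x ^ 2)) := by
      simpa using ((h1.const_mul (x ^ 2)).const_add (1 - x ^ 2))
    have h3 := (Real.continuous_sqrt.tendsto _).comp h2
    exact tendsto_const_nhds.div h3 (by positivity)
  have hgcont : Continuous g := by
    apply Real.continuous_exp.mul
    apply Continuous.pow
    exact Continuous.div (by continuity) (by continuity)
      (fun t => ne_of_gt (Real.sqrt_pos.mpr (hD t)))
  have hint : IntegrableOn g (Ioi 0) := by
    have hbound : IntegrableOn
        (fun t : ℝ => (|x| ^ 3 / Real.sqrt (1 - x ^ 2) ^ 3) * Real.exp (-2 * t)) (Ioi 0) :=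
      (exp_neg_integrableOn_Ioi 0 (by norm_num : (0:ℝ) < 2)).const_mul _
    apply hbound.mono' hgcont.aestronglyMeasurable.restrict
    refine ae_of_all _ fun t => ?_
    have hDt := hD t
    have hst : 0 < Real.sqrt (1 - x ^ 2 + x ^ 2 * Real.exp (-2 * t)) := Real.sqrt_pos.mpr hDt
    have hsc : 0 < Real.sqrt (1 - x ^ 2) := Real.sqrt_pos.mpr hc0
    have hle : Real.sqrt (1 - x ^ 2) ≤ Real.sqrt (1 - x ^ 2 + x ^ 2 * Real.exp (-2 * t)) :=
      Real.sqrt_le_sqrt (by nlinarith [Real.exp_pos (-2 * t)])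
    rw [Real.norm_eq_abs, hgeq t, abs_div, abs_mul, abs_pow, abs_pow,
      abs_of_pos (Real.exp_pos _), abs_of_pos hst, div_mul_eq_mul_div]
    gcongr
  have key := integral_Ioi_of_hasDerivAt_of_tendsto hcont (fun t _ => hderiv t) hint htend
  rw [key]
  have hF0 : F 0 = x := by
    simp only [hF]
    norm_num
  rw [hF0]; ring
end
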